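/- Let V be a finite set of n nodes and P = (p_1, …, p_m), m > 1, a consistent set of monitoring paths where p_i has length d_i (number of nodes). Set N_max = min{Σ_{i=1}^{m} d_i, 2·m·(m−1)} (equivalently m·min{d̄, 2(m−1)} for average length d̄) and i_max = max{k ∈ ℕ : Σ_{i=1}^{k} i·C(m,i) ≤ N_max}. Then the number of identifiable nodes is at most min{Σ_{i=1}^{i_max} C(m,i) + ⌊(N_max − Σ_{i=1}^{i_max} i·C(m,i))/(i_max + 1)⌋, n}. -/

import Mathlib

/-- The contiguous segment of the list `l` between (the first occurrences of) the
nodes `u` and `w`, inclusive, taken in the order of `l`. -/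
def seg {V : Type*} [DecidableEq V] (l : List V) (u w : V) : List V :=
  (l.drop (min (l.idxOf u) (l.idxOf w))).take
    (max (l.idxOf u) (l.idxOf w) - min (l.idxOf u) (l.idxOf w) + 1)

/-- Two paths are consistent if, for any two nodes `u, w` appearing on both, the
contiguous segment of one between `u` and `w` equals, up to reversal, the
contiguous segment of the other between `u` and `w`. -/
def ConsistentPair {V : Type*} [DecidableEq V] (l l' : List V) : Prop :=
  ∀ u w : V, u ∈ l → w ∈ l → u ∈ l' → w ∈ l' →
    seg l u w = seg l' u w ∨ seg l u w = (seg l' u w).reverse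

/-- A family of paths is consistent if every two of its paths are consistent. -/
def Consistent {V : Type*} [DecidableEq V] {ι : Type*} (p : ι → List V) : Prop :=
  ∀ i j, ConsistentPair (p i) (p j)

/-- The encoding of a node `v` w.r.t. monitoring paths `p`. -/
def encoding {V : Type*} [DecidableEq V] {m : ℕ} (p : Fin m → List V) (v : V) :
    Finset (Fin m) :=
  Finset.univ.filter fun i => v ∈ p i

/-- A node is identifiable iff its encoding is nonempty and distinct from the
encoding of every other node. -/
def Identifiable {V : Type*} [DecidableEq V] {m : ℕ} (p : Fin m → List V) (v : V) :
    Prop :=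
  encoding p v ≠ ∅ ∧ ∀ w : V, w ≠ v → encoding p w ≠ encoding p v

/-- `i_max = max {k : Σ_{i=1}^k i·C(m,i) ≤ N}` (the partial sums are constant beyond
`k = m` since `C(m,i) = 0` for `i > m`, so the maximum is realized within `{0,…,m}`). -/
def imax (m N : ℕ) : ℕ :=
  Nat.findGreatest (fun k => ∑ i ∈ Finset.Icc 1 k, i * m.choose i ≤ N) m

/-- `Σ_{i=1}^{i_max} C(m,i) + ⌊(N − Σ_{i=1}^{i_max} i·C(m,i)) / (i_max + 1)⌋`. -/
def boundFormula (m N : ℕ) : ℕ :=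
  (∑ i ∈ Finset.Icc 1 (imax m N), m.choose i) +
    (N - ∑ i ∈ Finset.Icc 1 (imax m N), i * m.choose i) / (imax m N + 1)

set_option linter.unusedSectionVars false

section lists
variable {V : Type*} [DecidableEq V]

lemma seg_subset (l : List V) (u w : V) : seg l u w ⊆ l :=
  fun _ hx => List.mem_of_mem_drop (List.mem_of_mem_take hx)

lemma mem_seg_of_between {l : List V} (hl : l.Nodup) {t1 t t2 : ℕ}
    (h1 : t1 ≤ t) (h2 : t ≤ t2) (ht2 : t2 < l.length) :
    l[t]'(lt_of_le_of_lt h2 ht2) ∈ seg l (l[t1]'(by omega)) (l[t2]'(ht2)) := by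
  have e1 : l.idxOf (l[t1]'(by omega)) = t1 := List.Nodup.idxOf_getElem hl _ _
  have e2 : l.idxOf (l[t2]'ht2) = t2 := List.Nodup.idxOf_getElem hl _ _
  rw [seg, e1, e2, min_eq_left (le_trans h1 h2), max_eq_right (le_trans h1 h2)]
  have hlen : t - t1 < ((l.drop t1).take (t2 - t1 + 1)).length := by
    simp [List.length_take, List.length_drop]; omega
  have : ((l.drop t1).take (t2 - t1 + 1))[t - t1]'hlen = l[t]'(by omega) := by
    rw [List.getElem_take, List.getElem_drop]
    congr 1; omega
  rw [← this]
  exact List.getElem_mem _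

lemma interval_mem {l l' : List V} (hl : l.Nodup) (hc : ConsistentPair l l')
    {u v w : V} (hu : u ∈ l) (hv : v ∈ l) (hw : w ∈ l)
    (h1 : l.idxOf u ≤ l.idxOf v) (h2 : l.idxOf v ≤ l.idxOf w)
    (hu' : u ∈ l') (hw' : w ∈ l') : v ∈ l' := by
  have ht2 : l.idxOf w < l.length := List.idxOf_lt_length_iff.2 hw
  have ht1 : l.idxOf u < l.length := List.idxOf_lt_length_iff.2 hu
  have htv : l.idxOf v < l.length := List.idxOf_lt_length_iff.2 hv
  have hmem := mem_seg_of_between hl h1 h2 ht2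
  rw [List.getElem_idxOf ht1, List.getElem_idxOf htv, List.getElem_idxOf ht2] at hmem
  rcases hc u w hu hw hu' hw' with h | h
  · rw [h] at hmem; exact seg_subset l' u w hmem
  · rw [h, List.mem_reverse] at hmem; exact seg_subset l' u w hmem

end lists
set_option linter.unusedSectionVars false

section positions
variable {V : Type*} [DecidableEq V] {m : ℕ}

/-- positions on path `i` covered by path `j` -/
def Ipos (p : Fin m → List V) (i j : Fin m) : Finset ℕ :=
  ((p i).toFinset.filter (fun w => w ∈ p j)).image (p i).idxOf

lemma mem_Ipos_iff {p : Fin m → List V} {i j : Fin m} {t : ℕ} :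
    t ∈ Ipos p i j ↔ ∃ x, x ∈ p i ∧ (p i).idxOf x = t ∧ x ∈ p j := by
  simp only [Ipos, Finset.mem_image, Finset.mem_filter, List.mem_toFinset]
  tauto

lemma mem_Ipos_of {p : Fin m → List V} {i j : Fin m} {x : V}
    (h1 : x ∈ p i) (h2 : x ∈ p j) : (p i).idxOf x ∈ Ipos p i j :=
  mem_Ipos_iff.2 ⟨x, h1, rfl, h2⟩

lemma Ipos_lt {p : Fin m → List V} {i j : Fin m} {t : ℕ} (ht : t ∈ Ipos p i j) :
    t < (p i).length := by
  obtain ⟨x, hx, rfl, -⟩ := mem_Ipos_iff.1 ht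
  exact List.idxOf_lt_length_iff.2 hx

lemma Ipos_interval {p : Fin m → List V} (hnodup : ∀ i, (p i).Nodup)
    (hcons : Consistent p) {i j : Fin m} {t1 t t2 : ℕ}
    (h1 : t1 ∈ Ipos p i j) (h2 : t2 ∈ Ipos p i j) (hle1 : t1 ≤ t) (hle2 : t ≤ t2) :
    t ∈ Ipos p i j := by
  obtain ⟨x1, hx1, hx1t, hm1⟩ := mem_Ipos_iff.1 h1
  obtain ⟨x2, hx2, hx2t, hm2⟩ := mem_Ipos_iff.1 h2
  have ht : t < (p i).length := lt_of_le_of_lt hle2 (hx2t ▸ List.idxOf_lt_length_iff.2 hx2)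
  have hxl : (p i)[t] ∈ p i := List.getElem_mem _
  have hxt : (p i).idxOf ((p i)[t]'ht) = t := List.Nodup.idxOf_getElem (hnodup i) _ _
  refine mem_Ipos_iff.2 ⟨(p i)[t], hxl, hxt, ?_⟩
  exact interval_mem (hnodup i) (hcons i j) hx1 hxl hx2
    (by omega) (by omega) hm1 hm2

lemma mem_encoding {p : Fin m → List V} {v : V} {j : Fin m} :
    j ∈ encoding p v ↔ v ∈ p j := by simp [encoding]

lemma enc_injOn {p : Fin m → List V} {v w : V} (hv : Identifiable p v)
    (h : encoding p w = encoding p v) : w = v := by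
  by_contra hne
  exact hv.2 w hne h

end positions

section perpath
variable {V : Type*} [DecidableEq V] {m : ℕ}

/-- Per-path bound: at most `2m-3` identifiable nodes with encoding of size `≥ 2`
lie on any single path. -/
lemma perpath (hm : 1 < m) (p : Fin m → List V) (hnodup : ∀ i, (p i).Nodup)
    (hcons : Consistent p) (i : Fin m) (D : Finset V)
    (hD : ∀ v, v ∈ D → Identifiable p v ∧ 2 ≤ (encoding p v).card ∧ v ∈ p i) :
    D.card ≤ 2 * m - 3 := by
  classical
  rcases D.eq_empty_or_nonempty with hDe | hDne
  · rw [hDe]; simp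
  -- every node with fat encoding on p i lies on some other path
  have hfat : ∀ v : V, v ∈ p i → 2 ≤ (encoding p v).card →
      ∃ j : Fin m, j ≠ i ∧ v ∈ p j := by
    intro v hvl hcard
    have hi : i ∈ encoding p v := mem_encoding.2 hvl
    have : ((encoding p v).erase i).Nonempty := by
      rw [← Finset.card_pos, Finset.card_erase_of_mem hi]; omega
    obtain ⟨j, hj⟩ := this
    exact ⟨j, Finset.ne_of_mem_erase hj, mem_encoding.1 (Finset.mem_of_mem_erase hj)⟩
  -- A j, B j : endpoints of the interval of positions of p i covered by p j
  set A : Fin m → ℕ := fun j =>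
    if h : (Ipos p i j).Nonempty then (Ipos p i j).min' h else 0 with hA
  set B : Fin m → ℕ := fun j =>
    if h : (Ipos p i j).Nonempty then (Ipos p i j).max' h else 0 with hB
  -- covered positions
  set Cov : Finset ℕ := (Finset.range (p i).length).filter
    (fun t => ∃ j, j ≠ i ∧ t ∈ Ipos p i j) with hCov
  have hCovNe : Cov.Nonempty := by
    obtain ⟨v, hv⟩ := hDne
    obtain ⟨hvi, hvc, hvl⟩ := hD v hv
    obtain ⟨j, hji, hvj⟩ := hfat v hvl hvc
    refine ⟨(p i).idxOf v, ?_⟩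
    simp only [hCov, Finset.mem_filter, Finset.mem_range]
    exact ⟨List.idxOf_lt_length_iff.2 hvl, j, hji, mem_Ipos_of hvl hvj⟩
  set bstar : ℕ := Cov.max' hCovNe with hbstar
  obtain ⟨hbl, J, hJi, hbJ⟩ : bstar < (p i).length ∧ ∃ J, J ≠ i ∧ bstar ∈ Ipos p i J := by
    have := Cov.max'_mem hCovNe
    simp only [hCov, Finset.mem_filter, Finset.mem_range] at this
    exact ⟨this.1, this.2⟩
  have hBJ : B J = bstar := by
    have hne : (Ipos p i J).Nonempty := ⟨bstar, hbJ⟩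
    rw [hB]; simp only [dif_pos hne]
    refine le_antisymm ?_ (Finset.le_max' _ _ hbJ)
    have hmax := (Ipos p i J).max'_mem hne
    refine Finset.le_max' _ _ ?_
    simp only [hCov, Finset.mem_filter, Finset.mem_range]
    exact ⟨Ipos_lt hmax, J, hJi, hmax⟩
  -- the key per-element existence lemma
  have key : ∀ v ∈ D, ∃ (j : Fin m) (s : Bool), j ≠ i ∧
      (s = true → ∃ x, x ∈ p i ∧ (p i).idxOf x = A j ∧
        encoding p x = encoding p v) ∧
      (s = false → B j < bstar ∧ ∃ x, x ∈ p i ∧ (p i).idxOf x = B j + 1 ∧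
        encoding p x = encoding p v) := by
    intro v hv
    obtain ⟨hvi, hvc, hvl⟩ := hD v hv
    set Te : Finset ℕ := ((p i).toFinset.filter
      (fun w => encoding p w = encoding p v)).image (p i).idxOf with hTe
    have hTeNe : Te.Nonempty :=
      ⟨(p i).idxOf v, Finset.mem_image.2 ⟨v, Finset.mem_filter.2
        ⟨List.mem_toFinset.2 hvl, rfl⟩, rfl⟩⟩
    set t : ℕ := Te.min' hTeNe with ht
    have htmem : t ∈ Te := Te.min'_mem hTeNe
    obtain ⟨w, hwl, hwe, hwt⟩ : ∃ w, w ∈ p i ∧ encoding p w = encoding p v ∧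
        (p i).idxOf w = t := by
      simp only [hTe, Finset.mem_image, Finset.mem_filter, List.mem_toFinset] at htmem
      obtain ⟨w, ⟨hw, hwe⟩, hwt⟩ := htmem
      exact ⟨w, hw, hwe, hwt⟩
    have htl : t < (p i).length := hwt ▸ List.idxOf_lt_length_iff.2 hwl
    have hwc : 2 ≤ (encoding p w).card := by rw [hwe]; exact hvc
    -- position t is covered
    have htcov : t ≤ bstar := by
      obtain ⟨j', hj'i, hj'⟩ := hfat w hwl hwc
      refine Finset.le_max' _ _ ?_
      simp only [hCov, Finset.mem_filter, Finset.mem_range]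
      exact ⟨htl, j', hj'i, hwt ▸ mem_Ipos_of hwl hj'⟩
    by_cases ht0 : t = 0
    · -- leftmost encoding class at position 0 : map to (j, start) with A j = 0
      obtain ⟨j, hji, hwj⟩ := hfat w hwl hwc
      have h0I : (0 : ℕ) ∈ Ipos p i j := ht0 ▸ hwt ▸ mem_Ipos_of hwl hwj
      have hne : (Ipos p i j).Nonempty := ⟨0, h0I⟩
      have hAj : A j = 0 := by
        rw [hA]; simp only [dif_pos hne]
        exact Nat.le_zero.1 (Finset.min'_le _ _ h0I)
      exact ⟨j, true, hji, fun _ => ⟨w, hwl, by omega, hwe⟩, by simp⟩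
    · -- t > 0 : there is a node y at position t-1 with a different encoding
      have htpos : 0 < t := Nat.pos_of_ne_zero ht0
      have hty : t - 1 < (p i).length := by omega
      obtain ⟨y, hyl, hyt⟩ : ∃ y, y ∈ p i ∧ (p i).idxOf y = t - 1 :=
        ⟨(p i)[t-1], List.getElem_mem _, List.Nodup.idxOf_getElem (hnodup i) _ _⟩
      have hyne : encoding p y ≠ encoding p v := by
        intro hcontra
        have : t - 1 ∈ Te := Finset.mem_image.2 ⟨y, Finset.mem_filter.2
          ⟨List.mem_toFinset.2 hyl, hcontra⟩, hyt⟩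
        have := Finset.min'_le _ _ this
        omega
      -- unique nodes at positions t and t-1
      have hnodet : ∀ x, x ∈ p i → (p i).idxOf x = t → x = w := by
        intro x hx hxt
        exact (List.idxOf_inj hx).1 (by rw [hxt, hwt])
      have hnodet1 : ∀ x, x ∈ p i → (p i).idxOf x = t - 1 → x = y := by
        intro x hx hxt
        exact (List.idxOf_inj hx).1 (by rw [hxt, hyt])
      by_cases hcase : ((encoding p w) \ encoding p y).Nonempty
      · -- a path j enters at t : A j = t
        obtain ⟨j, hj⟩ := hcase
        rw [Finset.mem_sdiff] at hj
        have hji : j ≠ i := by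
          rintro rfl
          exact hj.2 (mem_encoding.2 hyl)
        have htI : t ∈ Ipos p i j := hwt ▸ mem_Ipos_of hwl (mem_encoding.1 hj.1)
        have ht1I : t - 1 ∉ Ipos p i j := by
          intro hmem
          obtain ⟨x, hx, hxt, hxj⟩ := mem_Ipos_iff.1 hmem
          rw [hnodet1 x hx hxt] at hxj
          exact hj.2 (mem_encoding.2 hxj)
        have hne : (Ipos p i j).Nonempty := ⟨t, htI⟩
        have hAj : A j = t := by
          rw [hA]; simp only [dif_pos hne]
          have hle : (Ipos p i j).min' hne ≤ t := Finset.min'_le _ _ htI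
          rcases Nat.lt_or_ge ((Ipos p i j).min' hne) t with hlt | hge
          · exact absurd (Ipos_interval hnodup hcons ((Ipos p i j).min'_mem hne) htI
              (by omega) (by omega)) ht1I
          · omega
        exact ⟨j, true, hji, fun _ => ⟨w, hwl, by omega, hwe⟩, by simp⟩
      · -- a path j leaves at t-1 : B j = t - 1
        have hcase2 : ((encoding p y) \ encoding p w).Nonempty := by
          rw [Finset.sdiff_nonempty]
          intro hsub
          rw [Finset.not_nonempty_iff_eq_empty, Finset.sdiff_eq_empty_iff_subset] at hcase
          exact hyne (hwe ▸ le_antisymm hsub hcase)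
        obtain ⟨j, hj⟩ := hcase2
        rw [Finset.mem_sdiff] at hj
        have hji : j ≠ i := by
          rintro rfl
          exact hj.2 (mem_encoding.2 hwl)
        have ht1I : t - 1 ∈ Ipos p i j := hyt ▸ mem_Ipos_of hyl (mem_encoding.1 hj.1)
        have htI : t ∉ Ipos p i j := by
          intro hmem
          obtain ⟨x, hx, hxt, hxj⟩ := mem_Ipos_iff.1 hmem
          rw [hnodet x hx hxt] at hxj
          exact hj.2 (mem_encoding.2 hxj)
        have hne : (Ipos p i j).Nonempty := ⟨t - 1, ht1I⟩
        have hBj : B j = t - 1 := by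
          rw [hB]; simp only [dif_pos hne]
          have hge : t - 1 ≤ (Ipos p i j).max' hne := Finset.le_max' _ _ ht1I
          rcases Nat.lt_or_ge (t-1) ((Ipos p i j).max' hne) with hlt | hge2
          · exact absurd (Ipos_interval hnodup hcons ht1I ((Ipos p i j).max'_mem hne)
              (by omega) (by omega)) htI
          · omega
        exact ⟨j, false, hji, by simp, fun _ => ⟨by omega, w, hwl, by omega, hwe⟩⟩
  haveI : Inhabited (Fin m) := ⟨⟨0, by omega⟩⟩
  choose! f s hfne hftrue hffalse using key
  -- the target finset of events
  set T : Finset (Fin m × Bool) :=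
    ((Finset.univ.erase i) ×ˢ (Finset.univ : Finset Bool)).erase (J, false) with hT
  have hcardT : T.card = 2 * m - 3 := by
    rw [hT, Finset.card_erase_of_mem, Finset.card_product]
    · simp only [Finset.card_erase_of_mem (Finset.mem_univ i), Finset.card_univ,
        Fintype.card_fin, Fintype.card_bool]
      omega
    · exact Finset.mem_product.2 ⟨Finset.mem_erase.2 ⟨hJi, Finset.mem_univ _⟩,
        Finset.mem_univ _⟩
  calc D.card ≤ T.card := by
        apply Finset.card_le_card_of_injOn (fun v => (f v, s v))
        · intro v hv
          rw [hT, Finset.mem_coe, Finset.mem_erase]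
          constructor
          · intro hcontra
            have hfv : f v = J := congrArg Prod.fst hcontra
            have hsv : s v = false := congrArg Prod.snd hcontra
            have := (hffalse v hv hsv).1
            rw [hfv, hBJ] at this
            omega
          · exact Finset.mem_product.2 ⟨Finset.mem_erase.2 ⟨hfne v hv, Finset.mem_univ _⟩,
              Finset.mem_univ _⟩
        · intro v1 h1 v2 h2 heq
          have hf : f v1 = f v2 := congrArg Prod.fst heq
          have hs : s v1 = s v2 := congrArg Prod.snd heq
          have hencEq : encoding p v1 = encoding p v2 := by
            cases hsv : s v1 with
            | true =>
              obtain ⟨x1, hx1, hx1t, he1⟩ := hftrue v1 h1 hsv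
              obtain ⟨x2, hx2, hx2t, he2⟩ := hftrue v2 h2 (hs ▸ hsv)
              have : x1 = x2 := (List.idxOf_inj hx1).1 (by rw [hx1t, hx2t, hf])
              rw [← he1, ← he2, this]
            | false =>
              obtain ⟨_, x1, hx1, hx1t, he1⟩ := hffalse v1 h1 hsv
              obtain ⟨_, x2, hx2, hx2t, he2⟩ := hffalse v2 h2 (hs ▸ hsv)
              have : x1 = x2 := (List.idxOf_inj hx1).1 (by rw [hx1t, hx2t, hf])
              rw [← he1, ← he2, this]
          exact enc_injOn (hD v2 h2).1 hencEq
    _ = 2 * m - 3 := hcardT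

end perpath

lemma extremal {m N : ℕ} (E : Finset (Finset (Fin m))) (hE : ∀ e ∈ E, e ≠ ∅)
    (hsum : ∑ e ∈ E, e.card ≤ N) : E.card ≤ boundFormula m N := by
  classical
  set K := imax m N with hK
  have hKm : K ≤ m := Nat.findGreatest_le m
  have hW1 : ∑ k ∈ Finset.Icc 1 K, k * m.choose k ≤ N := by
    exact Nat.findGreatest_spec (P := fun k => ∑ i ∈ Finset.Icc 1 k, i * m.choose i ≤ N)
      (Nat.zero_le m) (by
        show ∑ i ∈ Finset.Icc 1 0, i * m.choose i ≤ N
        rw [Finset.Icc_eq_empty (by omega)]; simp)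
  -- fibers by cardinality
  set c : ℕ → ℕ := fun k => (E.filter (fun e => e.card = k)).card with hc
  have hmapsto : ∀ e ∈ E, e.card ∈ Finset.Icc 1 m := by
    intro e he
    rw [Finset.mem_Icc]
    constructor
    · rw [Nat.one_le_iff_ne_zero]
      intro h; exact hE e he (Finset.card_eq_zero.1 h)
    · calc e.card ≤ (Finset.univ : Finset (Fin m)).card := Finset.card_le_univ e
        _ = m := by simp
  have hcardE : E.card = ∑ k ∈ Finset.Icc 1 m, c k :=
    Finset.card_eq_sum_card_fiberwise hmapsto
  have hsumE : ∑ k ∈ Finset.Icc 1 m, k * c k = ∑ e ∈ E, e.card := by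
    rw [← Finset.sum_fiberwise_of_maps_to hmapsto (fun e => e.card)]
    refine Finset.sum_congr rfl fun k _ => ?_
    rw [Finset.sum_congr rfl (fun e he => (Finset.mem_filter.1 he).2), Finset.sum_const,
      smul_eq_mul, mul_comm]
  have hck : ∀ k, c k ≤ m.choose k := by
    intro k
    have hsub : E.filter (fun e => e.card = k) ⊆ Finset.univ.powersetCard k := by
      intro e he
      rw [Finset.mem_powersetCard]
      exact ⟨Finset.subset_univ e, (Finset.mem_filter.1 he).2⟩
    calc c k ≤ (Finset.univ.powersetCard k).card := Finset.card_le_card hsub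
      _ = m.choose k := by rw [Finset.card_powersetCard]; simp
  -- switch from Icc 1 to Ioc 0 and split at K
  have hIcc : ∀ n : ℕ, Finset.Icc 1 n = Finset.Ioc 0 n := fun n => by
    rw [← Finset.Icc_add_one_left_eq_Ioc]; rfl
  rw [boundFormula, ← hK]
  simp only [hIcc] at hW1 hcardE hsumE ⊢
  set a := ∑ k ∈ Finset.Ioc 0 K, c k with ha
  set b := ∑ k ∈ Finset.Ioc K m, c k with hb
  set Ta := ∑ k ∈ Finset.Ioc 0 K, k * c k with hTa
  set Tb := ∑ k ∈ Finset.Ioc K m, k * c k with hTb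
  set B1 := ∑ k ∈ Finset.Ioc 0 K, m.choose k with hB1
  set W1 := ∑ k ∈ Finset.Ioc 0 K, k * m.choose k with hW1def
  set d := ∑ k ∈ Finset.Ioc 0 K, (m.choose k - c k) with hd
  have hsplitc : a + b = ∑ k ∈ Finset.Ioc 0 m, c k :=
    Finset.sum_Ioc_consecutive _ (Nat.zero_le K) hKm
  have hsplitk : Ta + Tb = ∑ k ∈ Finset.Ioc 0 m, k * c k :=
    Finset.sum_Ioc_consecutive _ (Nat.zero_le K) hKm
  have f1 : a + d = B1 := by
    rw [ha, hd, ← Finset.sum_add_distrib]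
    exact Finset.sum_congr rfl fun k _ => Nat.add_sub_cancel' (hck k)
  have f2 : W1 ≤ Ta + K * d := by
    rw [hW1def, hTa, hd, Finset.mul_sum, ← Finset.sum_add_distrib]
    refine Finset.sum_le_sum fun k hk => ?_
    have hkK : k ≤ K := (Finset.mem_Ioc.1 hk).2
    have : m.choose k = c k + (m.choose k - c k) := (Nat.add_sub_cancel' (hck k)).symm
    calc k * m.choose k = k * c k + k * (m.choose k - c k) := by
          conv_lhs => rw [this]
          ring
      _ ≤ k * c k + K * (m.choose k - c k) := by
          exact Nat.add_le_add_left (Nat.mul_le_mul_right _ hkK) _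
  have f3 : (K + 1) * b ≤ Tb := by
    rw [hb, hTb, Finset.mul_sum]
    refine Finset.sum_le_sum fun k hk => ?_
    exact Nat.mul_le_mul_right _ (Finset.mem_Ioc.1 hk).1
  have f4 : Ta + Tb ≤ N := by rw [hsplitk, hsumE]; exact hsum
  -- the goal
  rw [hcardE, ← hsplitc]
  set q := (N - W1) / (K + 1) with hq
  set r := (N - W1) % (K + 1) with hr
  have hqr : (K + 1) * q + r = N - W1 := Nat.div_add_mod _ _
  have hrlt : r < K + 1 := Nat.mod_lt _ (by omega)
  have hN : W1 + ((K + 1) * q + r) = N := by rw [hqr]; exact Nat.add_sub_cancel' hW1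
  -- final arithmetic
  by_contra hcon
  push_neg at hcon
  have hb' : d + q + 1 ≤ b := by omega
  have h5 : (K + 1) * (d + q + 1) ≤ (K + 1) * b := Nat.mul_le_mul_left _ hb'
  have h6 : (K + 1) * (d + q + 1) = K * d + d + (K + 1) * q + K + 1 := by ring
  have h7 : (K + 1) * b + Ta ≤ Ta + K * d + ((K + 1) * q + r) := by
    calc (K + 1) * b + Ta ≤ Tb + Ta := by omega
      _ ≤ N := by omega
      _ = W1 + ((K + 1) * q + r) := hN.symm
      _ ≤ Ta + K * d + ((K + 1) * q + r) := by omega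
  omega


/-- Identifiability with consistent routing (Theorem IV.9): with `m > 1` consistent
routing paths on `n` nodes, setting `N_max = min (Σ_i d_i) (2·m·(m−1))`, the number
of identifiable nodes is at most `min (boundFormula m N_max) n`. -/
theorem identifiable_le_consistent_routing {V : Type*} [Fintype V] [DecidableEq V]
    {m : ℕ} (hm : 1 < m) (p : Fin m → List V) (hnodup : ∀ i, (p i).Nodup)
    (hcons : Consistent p) :
    {v : V | Identifiable p v}.ncard ≤
      min (boundFormula m (min (∑ i, (p i).length) (2 * m * (m - 1))))
        (Fintype.card V) := by
  classical
  set N := min (∑ i, (p i).length) (2 * m * (m - 1)) with hN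
  set S : Finset V := Finset.univ.filter (fun v => Identifiable p v) with hS
  have hSmem : ∀ v, v ∈ S ↔ Identifiable p v := by
    intro v; simp [hS]
  have hseteq : {v : V | Identifiable p v} = ↑S := by
    ext v; simp [hSmem v]
  rw [hseteq, Set.ncard_coe_finset]
  refine le_min ?_ ?_
  swap
  · calc S.card ≤ (Finset.univ : Finset V).card := Finset.card_le_univ S
      _ = Fintype.card V := Finset.card_univ
  -- the combinatorial bound
  have hinj : ∀ v1 ∈ S, ∀ v2 ∈ S, encoding p v1 = encoding p v2 → v1 = v2 := by
    intro v1 h1 v2 h2 h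
    exact enc_injOn ((hSmem v2).1 h2) h
  set E : Finset (Finset (Fin m)) := S.image (encoding p) with hE
  have hcardE : E.card = S.card := Finset.card_image_of_injOn hinj
  have hsumE : ∑ e ∈ E, e.card = ∑ v ∈ S, (encoding p v).card :=
    Finset.sum_image hinj
  -- double counting
  have hdc : ∀ F : Finset V, ∑ v ∈ F, (encoding p v).card
      = ∑ i : Fin m, (F.filter (fun v => v ∈ p i)).card := by
    intro F
    simp only [encoding, Finset.card_filter]
    rw [Finset.sum_comm]
  -- bound by total path length
  have hb1 : ∑ v ∈ S, (encoding p v).card ≤ ∑ i, (p i).length := by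
    rw [hdc]
    refine Finset.sum_le_sum fun i _ => ?_
    have hsub : S.filter (fun v => v ∈ p i) ⊆ (p i).toFinset := by
      intro v hv
      exact List.mem_toFinset.2 (Finset.mem_filter.1 hv).2
    calc (S.filter (fun v => v ∈ p i)).card ≤ (p i).toFinset.card :=
          Finset.card_le_card hsub
      _ = (p i).length := List.toFinset_card_of_nodup (hnodup i)
  -- bound by 2m(m-1), using consistency
  have hb2 : ∑ v ∈ S, (encoding p v).card ≤ 2 * m * (m - 1) := by
    have hsplit := Finset.sum_filter_add_sum_filter_not S
      (fun v => 2 ≤ (encoding p v).card) (fun v => (encoding p v).card)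
    -- the nodes with singleton encodings
    have hsmall : ∀ v ∈ S.filter (fun v => ¬ 2 ≤ (encoding p v).card),
        (encoding p v).card = 1 := by
      intro v hv
      obtain ⟨hvS, hvc⟩ := Finset.mem_filter.1 hv
      have h1 : 1 ≤ (encoding p v).card :=
        Finset.card_pos.2 (Finset.nonempty_iff_ne_empty.2 ((hSmem v).1 hvS).1)
      omega
    have hsmallsum : ∑ v ∈ S.filter (fun v => ¬ 2 ≤ (encoding p v).card),
        (encoding p v).card ≤ m := by
      rw [Finset.sum_congr rfl hsmall, Finset.sum_const, smul_eq_mul, mul_one]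
      have := Finset.card_le_card_of_injOn
        (s := S.filter (fun v => ¬ 2 ≤ (encoding p v).card))
        (f := encoding p) (t := Finset.univ.powersetCard 1) ?_ ?_
      · calc (S.filter (fun v => ¬ 2 ≤ (encoding p v).card)).card
            ≤ ((Finset.univ : Finset (Fin m)).powersetCard 1).card := this
          _ = m := by rw [Finset.card_powersetCard]; simp
      · intro v hv
        rw [Finset.mem_coe, Finset.mem_powersetCard]
        exact ⟨Finset.subset_univ _, hsmall v hv⟩
      · intro v1 h1 v2 h2 h
        exact hinj v1 (Finset.mem_filter.1 h1).1 v2 (Finset.mem_filter.1 h2).1 h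
    have hbigsum : ∑ v ∈ S.filter (fun v => 2 ≤ (encoding p v).card),
        (encoding p v).card ≤ m * (2 * m - 3) := by
      rw [hdc]
      calc ∑ i : Fin m, ((S.filter (fun v => 2 ≤ (encoding p v).card)).filter
            (fun v => v ∈ p i)).card
          ≤ ∑ _i : Fin m, (2 * m - 3) := by
            refine Finset.sum_le_sum fun i _ => ?_
            refine perpath hm p hnodup hcons i _ ?_
            intro v hv
            obtain ⟨hv1, hv2⟩ := Finset.mem_filter.1 hv
            obtain ⟨hv3, hv4⟩ := Finset.mem_filter.1 hv1
            exact ⟨(hSmem v).1 hv3, hv4, hv2⟩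
        _ = m * (2 * m - 3) := by
            rw [Finset.sum_const, Finset.card_univ, Fintype.card_fin, smul_eq_mul]
    have harith : m * (2 * m - 3) + m ≤ 2 * m * (m - 1) := by
      obtain ⟨k, rfl⟩ : ∃ k, m = k + 2 := ⟨m - 2, by omega⟩
      have h1 : 2 * (k + 2) - 3 = 2 * k + 1 := by omega
      have h2 : k + 2 - 1 = k + 1 := by omega
      rw [h1, h2]
      ring_nf
      omega
    omega
  -- conclude with the extremal lemma
  have hEne : ∀ e ∈ E, e ≠ ∅ := by
    intro e he
    obtain ⟨v, hv, rfl⟩ := Finset.mem_image.1 he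
    exact ((hSmem v).1 hv).1
  calc S.card = E.card := hcardE.symm
    _ ≤ boundFormula m N := by
        refine extremal E hEne ?_
        rw [hsumE]
        exact le_min hb1 hb2
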